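/- Let Z, R, W be finite nonempty types, let α : Z → ℂ, let ψ : Z → R → ℂ satisfy Σ_{r∈R} |ψ z r|² = 1 for every z ∈ Z, let f : Z → W → ℝ, let U be a unitary matrix over ℂ with rows and columns indexed by Z × R, and let M be any matrix over ℂ with rows and columns indexed by W. Then for every y ∈ W, Σ_{(z',r') ∈ Z×R} | Σ_{(z,r) ∈ Z×R} U((z',r'),(z,r)) · α(z) · ψ(z)(r) · (1/√|W|) · Σ_{w∈W} M(y,w) · exp(i·f(z)(w)) |² = (1/|W|) · Σ_{z∈Z} |α(z)|² · | Σ_{w∈W} M(y,w) · exp(i·f(z)(w)) |². (This identity is the mathematical core of the proof that the circuit (F†⊗H^⊗l)D(F⊗H^⊗l) is weakly simulatable whenever F is: the marginal output distribution on the last register depends only on the probabilities |α(z)|² and not on the states ψ(z) or on the unitary U.) -/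

import Mathlib

open scoped BigOperators

lemma sq_norm_cast (z : ℂ) : ((‖z‖^2 : ℝ) : ℂ) = z * (starRingEnd ℂ) z := by
  rw [Complex.mul_conj]
  norm_cast
  rw [← Complex.sq_norm]

lemma key_unitary_sum {n : Type*} [Fintype n] [DecidableEq n] (U : Matrix n n ℂ)
    (hU : U.conjTranspose * U = 1) (v : n → ℂ) :
    ∑ p, ‖∑ q, U p q * v q‖^2 = ∑ q, ‖v q‖^2 := by
  have hinj : Function.Injective ((↑) : ℝ → ℂ) := Complex.ofReal_injective
  apply hinj
  simp only [Complex.ofReal_sum, sq_norm_cast, map_sum, map_mul, Finset.sum_mul,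
    Finset.mul_sum]
  rw [Finset.sum_comm]
  have h1 : ∀ q q' : n, ∑ p, (starRingEnd ℂ) (U p q') * U p q
      = if q' = q then 1 else 0 := by
    intro q q'
    have := congrFun (congrFun hU q') q
    simpa [Matrix.mul_apply, Matrix.conjTranspose_apply, Matrix.one_apply] using this
  have h2 : ∀ y i : n, ∑ x, U x i * v i * ((starRingEnd ℂ) (U x y) * (starRingEnd ℂ) (v y))
      = (if y = i then 1 else 0) * (v i * (starRingEnd ℂ) (v y)) := by
    intro y i
    rw [← h1 i y, Finset.sum_mul]
    exact Finset.sum_congr rfl fun x _ => by ring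
  calc ∑ y : n, ∑ x : n, ∑ i : n, U x i * v i * ((starRingEnd ℂ) (U x y) * (starRingEnd ℂ) (v y))
      = ∑ y : n, ∑ i : n, ∑ x : n, U x i * v i * ((starRingEnd ℂ) (U x y) * (starRingEnd ℂ) (v y)) := by
        exact Finset.sum_congr rfl fun y _ => Finset.sum_comm
    _ = ∑ y : n, ∑ i : n, (if y = i then 1 else 0) * (v i * (starRingEnd ℂ) (v y)) := by
        simp only [h2]
    _ = ∑ x : n, v x * (starRingEnd ℂ) (v x) := by
        simp [ite_mul, Finset.sum_ite_eq]

/-- The marginal output distribution of the circuit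
`(F† ⊗ H^⊗l) D (F ⊗ H^⊗l)` on the last register depends only on the
probabilities `|α z|²`, not on the states `ψ z` or the unitary `U`. -/
theorem stmt_0 {Z R W : Type*} [Fintype Z] [Fintype R] [Fintype W]
    [DecidableEq Z] [DecidableEq R]
    [Nonempty Z] [Nonempty R] [Nonempty W]
    (α : Z → ℂ) (ψ : Z → R → ℂ)
    (hψ : ∀ z : Z, ∑ r : R, ‖ψ z r‖ ^ 2 = 1)
    (f : Z → W → ℝ)
    (U : Matrix (Z × R) (Z × R) ℂ)
    (hU : U * U.conjTranspose = 1)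
    (M : Matrix W W ℂ) :
    ∀ y : W,
      ∑ p : Z × R,
          ‖∑ q : Z × R,
              U p q * α q.1 * ψ q.1 q.2 *
                ((1 / Real.sqrt (Fintype.card W) : ℝ) : ℂ) *
                ∑ w : W, M y w * Complex.exp (Complex.I * (f q.1 w : ℝ))‖ ^ 2
        = (1 / (Fintype.card W : ℝ)) *
            ∑ z : Z, ‖α z‖ ^ 2 *
              ‖∑ w : W, M y w * Complex.exp (Complex.I * (f z w : ℝ))‖ ^ 2 := by
  intro y
  set c : ℂ := ((1 / Real.sqrt (Fintype.card W) : ℝ) : ℂ) with hc_def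
  set S : Z → ℂ := fun z => ∑ w : W, M y w * Complex.exp (Complex.I * (f z w : ℝ)) with hS_def
  have hUU : U.conjTranspose * U = 1 := mul_eq_one_comm.mp hU
  have hkey := key_unitary_sum U hUU (fun q => α q.1 * ψ q.1 q.2 * c * S q.1)
  have hl : ∑ p : Z × R, ‖∑ q : Z × R, U p q * α q.1 * ψ q.1 q.2 * c * S q.1‖ ^ 2
      = ∑ q : Z × R, ‖α q.1 * ψ q.1 q.2 * c * S q.1‖ ^ 2 := by
    rw [← hkey]
    exact Finset.sum_congr rfl fun p _ => by
      have h : (∑ q : Z × R, U p q * α q.1 * ψ q.1 q.2 * c * S q.1)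
          = ∑ q : Z × R, U p q * (α q.1 * ψ q.1 q.2 * c * S q.1) :=
        Finset.sum_congr rfl fun q _ => by ring
      rw [h]
  rw [hl, Fintype.sum_prod_type]
  have hcard : (0 : ℝ) < (Fintype.card W : ℝ) := by
    exact_mod_cast Fintype.card_pos
  have hc2 : ‖c‖ ^ 2 = 1 / (Fintype.card W : ℝ) := by
    rw [hc_def, Complex.norm_real, Real.norm_eq_abs, sq_abs, div_pow, one_pow,
      Real.sq_sqrt (le_of_lt hcard)]
  have hz : ∀ z : Z, ∑ r : R, ‖α z * ψ z r * c * S z‖ ^ 2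
      = ‖α z‖ ^ 2 * (1 / (Fintype.card W : ℝ)) * ‖S z‖ ^ 2 := by
    intro z
    have : ∑ r : R, ‖α z * ψ z r * c * S z‖ ^ 2
        = (‖α z‖ ^ 2 * ‖c‖ ^ 2 * ‖S z‖ ^ 2) * ∑ r : R, ‖ψ z r‖ ^ 2 := by
      rw [Finset.mul_sum]
      exact Finset.sum_congr rfl fun r _ => by
        simp only [norm_mul, mul_pow]; ring
    rw [this, hψ z, hc2]; ring
  simp only [hz]
  rw [Finset.mul_sum]
  exact Finset.sum_congr rfl fun z _ => by ring
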